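/- Let A be an n×n real symmetric positive semidefinite matrix and 1 ≤ k ≤ n. Then the maximum over all k×k submatrices A(I,J) of |det(A(I,J))| is attained by some principal submatrix A(I,I). -/

import Mathlib

set_option maxHeartbeats 1000000

open Matrix Finset Equiv

namespace MaxVolAux

variable {n k : ℕ}

/-- Index sets of size `k`. -/
abbrev Idx (n k : ℕ) := {S : Finset (Fin n) // S.card = k}

noncomputable def emb (S : Idx n k) : Fin k → Fin n :=
  fun i => (S.1.orderIsoOfFin S.2 i : Fin n)

lemma emb_injective (S : Idx n k) : Function.Injective (emb S) := fun a b h =>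
  (S.1.orderIsoOfFin S.2).injective (Subtype.ext h)

lemma emb_mem (S : Idx n k) (i : Fin k) : emb S i ∈ S.1 :=
  (S.1.orderIsoOfFin S.2 i).2

lemma emb_congr {S T : Idx n k} (h : S.1 = T.1) (i : Fin k) : emb S i = emb T i := by
  cases S; cases T; subst h; rfl

/-- Rows of `M` selected by `S`. -/
noncomputable def rows (M : Matrix (Fin n) (Fin k) ℝ) (S : Idx n k) :
    Matrix (Fin k) (Fin k) ℝ :=
  M.submatrix (emb S) id

/-- Columns of `C` selected by `S`. -/
noncomputable def cols (C : Matrix (Fin n) (Fin n) ℝ) (S : Idx n k) :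
    Matrix (Fin n) (Fin k) ℝ :=
  C.submatrix id (emb S)

lemma image_emb (S : Idx n k) (σ : Perm (Fin k)) :
    Finset.image (fun i => emb S (σ i)) Finset.univ = S.1 := by
  apply Finset.eq_of_subset_of_card_le
  · intro x hx
    simp only [Finset.mem_image] at hx
    obtain ⟨i, _, rfl⟩ := hx
    exact emb_mem S (σ i)
  · have hinj : Function.Injective (fun i => emb S (σ i)) :=
      fun a b h => σ.injective (emb_injective S h)
    rw [S.2, Finset.card_image_of_injective _ hinj, Finset.card_univ, Fintype.card_fin]

/-- Injective maps `Fin k → Fin n` correspond to a `k`-subset plus a permutation. -/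
noncomputable def injEquiv (n k : ℕ) :
    (Idx n k × Perm (Fin k)) ≃ {p : Fin k → Fin n // Function.Injective p} :=
  Equiv.ofBijective
    (fun Sσ => ⟨fun i => emb Sσ.1 (Sσ.2 i), (emb_injective _).comp Sσ.2.injective⟩)
    ⟨by
      rintro ⟨S₁, σ₁⟩ ⟨S₂, σ₂⟩ h
      rw [Subtype.ext_iff] at h
      simp only at h
      obtain rfl : S₁ = S₂ := Subtype.ext (by
        rw [← image_emb S₁ σ₁, ← image_emb S₂ σ₂, h])
      have : σ₁ = σ₂ := Equiv.ext fun i => emb_injective S₁ (congrFun h i)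
      rw [this], by
      rintro ⟨p, hp⟩
      have hcard : (Finset.image p Finset.univ).card = k := by
        rw [Finset.card_image_of_injective _ hp, Finset.card_univ, Fintype.card_fin]
      refine ⟨⟨⟨Finset.image p Finset.univ, hcard⟩,
        Equiv.ofBijective
          (fun i => ((Finset.image p Finset.univ).orderIsoOfFin hcard).symm ⟨p i, by simp⟩)
          (Finite.injective_iff_bijective.mp (fun a b h => hp (Subtype.ext_iff.mp
            (((Finset.image p Finset.univ).orderIsoOfFin hcard).symm.injective h))))⟩, ?_⟩
      exact Subtype.ext (funext fun i => by simp [emb, Equiv.ofBijective])⟩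

@[simp] lemma injEquiv_apply (Sσ : Idx n k × Perm (Fin k)) (i : Fin k) :
    (injEquiv n k Sσ : Fin k → Fin n) i = emb Sσ.1 (Sσ.2 i) := rfl

lemma cauchyBinet (M N : Matrix (Fin n) (Fin k) ℝ) :
    (Mᵀ * N).det = ∑ S : Idx n k, (rows M S).det * (rows N S).det := by
  have key : ∀ p : Fin k → Fin n,
      (∑ σ : Perm (Fin k), (Perm.sign σ : ℝ) * ∏ i, M (p i) (σ i) * N (p i) i)
        = (∏ i, N (p i) i) * (Matrix.of fun a b => M (p b) a).det := by
    intro p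
    rw [Matrix.det_apply', Finset.mul_sum]
    refine Finset.sum_congr rfl fun σ _ => ?_
    simp only [Matrix.of_apply]
    rw [Finset.prod_mul_distrib]
    ring
  calc (Mᵀ * N).det
      = ∑ p : Fin k → Fin n, ∑ σ : Perm (Fin k),
          (Perm.sign σ : ℝ) * ∏ i, M (p i) (σ i) * N (p i) i := by
        simp only [Matrix.det_apply', Matrix.mul_apply, Matrix.transpose_apply,
          Finset.prod_univ_sum, Finset.mul_sum, Fintype.piFinset_univ]
        rw [Finset.sum_comm]
    _ = ∑ p : Fin k → Fin n,
          (∏ i, N (p i) i) * (Matrix.of fun a b => M (p b) a).det := by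
        exact Finset.sum_congr rfl fun p _ => key p
    _ = ∑ p ∈ Finset.univ.filter (fun p : Fin k → Fin n => Function.Injective p),
          (∏ i, N (p i) i) * (Matrix.of fun a b => M (p b) a).det := by
        symm
        apply Finset.sum_subset (Finset.filter_subset _ _)
        intro p _ hp
        simp only [Finset.mem_filter, Finset.mem_univ, true_and] at hp
        rw [Function.Injective] at hp
        push_neg at hp
        obtain ⟨a, b, hab, hne⟩ := hp
        rw [Matrix.det_zero_of_column_eq hne (fun r => by simp [hab]), mul_zero]
    _ = ∑ q : {p : Fin k → Fin n // Function.Injective p},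
          (∏ i, N (q.1 i) i) * (Matrix.of fun a b => M (q.1 b) a).det := by
        exact Finset.sum_subtype _ (fun x => by simp) _
    _ = ∑ Sσ : Idx n k × Perm (Fin k),
          (∏ i, N (emb Sσ.1 (Sσ.2 i)) i) *
            (Matrix.of fun a b => M (emb Sσ.1 (Sσ.2 b)) a).det :=
        (Fintype.sum_equiv (injEquiv n k) _ _ fun Sσ => rfl).symm
    _ = ∑ S : Idx n k, ∑ σ : Perm (Fin k),
          (∏ i, N (emb S (σ i)) i) * ((Perm.sign σ : ℝ) * (rows M S).det) := by
        rw [Fintype.sum_prod_type]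
        refine Finset.sum_congr rfl fun S _ => Finset.sum_congr rfl fun σ _ => ?_
        congr 1
        have : (Matrix.of fun a b => M (emb S (σ b)) a)
            = ((rows M S)ᵀ).submatrix id σ := by
          ext a b
          simp [rows, Matrix.submatrix, Matrix.transpose_apply]
        rw [this, Matrix.det_permute', Matrix.det_transpose]
    _ = ∑ S : Idx n k, (rows M S).det * (rows N S).det := by
        refine Finset.sum_congr rfl fun S _ => ?_
        have hdet : (rows N S).det
            = ∑ σ : Perm (Fin k), (Perm.sign σ : ℝ) * ∏ i, rows N S (σ i) i :=
          Matrix.det_apply' _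
        rw [hdet, Finset.mul_sum]
        refine Finset.sum_congr rfl fun σ _ => ?_
        simp only [rows, Matrix.submatrix_apply, id_eq]
        ring

end MaxVolAux


/-- The `k × k` submatrix of `A` with rows indexed by `I` and columns by `J`. -/
noncomputable def subm {n k : ℕ} (A : Matrix (Fin n) (Fin n) ℝ)
    (I J : Finset (Fin n)) (hI : I.card = k) (hJ : J.card = k) :
    Matrix (Fin k) (Fin k) ℝ :=
  A.submatrix (fun i => (I.orderIsoOfFin hI i : Fin n)) (fun j => (J.orderIsoOfFin hJ j : Fin n))

open scoped MatrixOrder in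
noncomputable def Matrix.PosSemidef.sqrt {n : ℕ} {A : Matrix (Fin n) (Fin n) ℝ}
    (_hA : A.PosSemidef) : Matrix (Fin n) (Fin n) ℝ :=
  CFC.sqrt A

open scoped MatrixOrder in
lemma Matrix.PosSemidef.sqrt_mul_self {n : ℕ} {A : Matrix (Fin n) (Fin n) ℝ}
    (hA : A.PosSemidef) : hA.sqrt * hA.sqrt = A :=
  CFC.sqrt_mul_sqrt_self A hA.nonneg

open scoped MatrixOrder in
lemma Matrix.PosSemidef.posSemidef_sqrt {n : ℕ} {A : Matrix (Fin n) (Fin n) ℝ}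
    (hA : A.PosSemidef) : hA.sqrt.PosSemidef :=
  (CFC.sqrt_nonneg A).posSemidef

namespace MaxVolAux

lemma subm_eq {n k : ℕ} (A : Matrix (Fin n) (Fin n) ℝ) (hA : A.PosSemidef)
    (I J : Finset (Fin n)) (hI : I.card = k) (hJ : J.card = k) :
    subm A I J hI hJ = (cols hA.sqrt ⟨I, hI⟩)ᵀ * cols hA.sqrt ⟨J, hJ⟩ := by
  have hC : hA.sqrt * hA.sqrt = A := hA.sqrt_mul_self
  have hsym : ∀ a b, hA.sqrt a b = hA.sqrt b a := by
    intro a b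
    conv_lhs => rw [← hA.posSemidef_sqrt.isHermitian]
    simp [Matrix.conjTranspose_apply]
  ext i j
  have lhs : subm A I J hI hJ i j = A (emb ⟨I, hI⟩ i) (emb ⟨J, hJ⟩ j) := rfl
  have rhs : ((cols hA.sqrt ⟨I, hI⟩)ᵀ * cols hA.sqrt ⟨J, hJ⟩) i j
      = ∑ l, hA.sqrt l (emb ⟨I, hI⟩ i) * hA.sqrt l (emb ⟨J, hJ⟩ j) := by
    rw [Matrix.mul_apply]; rfl
  rw [lhs, rhs]
  conv_lhs => rw [← hC]
  rw [Matrix.mul_apply]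
  exact Finset.sum_congr rfl fun l _ => by rw [hsym]

end MaxVolAux

open MaxVolAux

/-- For a symmetric positive semidefinite matrix, the maximum volume `k × k`
submatrix can be chosen to be a principal submatrix. -/
theorem maxvol_principal_of_posSemidef {n k : ℕ} (A : Matrix (Fin n) (Fin n) ℝ)
    (hA : A.PosSemidef) (hk1 : 1 ≤ k) (hkn : k ≤ n) :
    ∃ (I : Finset (Fin n)) (hI : I.card = k),
      ∀ (I' J' : Finset (Fin n)) (hI' : I'.card = k) (hJ' : J'.card = k),
        |(subm A I' J' hI' hJ').det| ≤ |(subm A I I hI hI).det| := by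
  classical
  have gram : ∀ (I J : Finset (Fin n)) (hI : I.card = k) (hJ : J.card = k),
      (subm A I J hI hJ).det
        = ∑ S : Idx n k, (rows (cols hA.sqrt ⟨I, hI⟩) S).det
            * (rows (cols hA.sqrt ⟨J, hJ⟩) S).det := by
    intro I J hI hJ
    rw [subm_eq A hA I J hI hJ, cauchyBinet]
  have hg : ∀ (I : Finset (Fin n)) (hI : I.card = k), 0 ≤ (subm A I I hI hI).det := by
    intro I hI
    rw [gram I I hI hI]
    exact Finset.sum_nonneg fun S _ => mul_self_nonneg _
  obtain ⟨I0, _, hI0⟩ : ∃ t ⊆ (Finset.univ : Finset (Fin n)), t.card = k :=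
    Finset.exists_subset_card_eq (by rw [Finset.card_univ, Fintype.card_fin]; exact hkn)
  haveI : Nonempty (Idx n k) := ⟨⟨I0, hI0⟩⟩
  obtain ⟨Im, _, hIm⟩ := Finset.exists_max_image (Finset.univ : Finset (Idx n k))
    (fun S => (subm A S.1 S.1 S.2 S.2).det) ⟨_, Finset.mem_univ (Classical.arbitrary _)⟩
  refine ⟨Im.1, Im.2, ?_⟩
  intro I' J' hI' hJ'
  set a : Idx n k → ℝ := fun S => (rows (cols hA.sqrt ⟨I', hI'⟩) S).det with ha
  set b : Idx n k → ℝ := fun S => (rows (cols hA.sqrt ⟨J', hJ'⟩) S).det with hb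
  have h1 : (subm A I' J' hI' hJ').det = ∑ S : Idx n k, a S * b S := gram I' J' hI' hJ'
  have h2 : (subm A I' I' hI' hI').det = ∑ S : Idx n k, a S ^ 2 := by
    rw [gram I' I' hI' hI']
    exact Finset.sum_congr rfl fun S _ => (sq (a S)).symm
  have h3 : (subm A J' J' hJ' hJ').det = ∑ S : Idx n k, b S ^ 2 := by
    rw [gram J' J' hJ' hJ']
    exact Finset.sum_congr rfl fun S _ => (sq (b S)).symm
  set m := (subm A Im.1 Im.1 Im.2 Im.2).det with hm
  have hm0 : 0 ≤ m := hg Im.1 Im.2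
  have hI'le : (subm A I' I' hI' hI').det ≤ m := hIm ⟨I', hI'⟩ (Finset.mem_univ _)
  have hJ'le : (subm A J' J' hJ' hJ').det ≤ m := hIm ⟨J', hJ'⟩ (Finset.mem_univ _)
  have hcs : (∑ S : Idx n k, a S * b S) ^ 2
      ≤ (∑ S : Idx n k, a S ^ 2) * ∑ S : Idx n k, b S ^ 2 :=
    Finset.sum_mul_sq_le_sq_mul_sq _ _ _
  have hd2 : (subm A I' J' hI' hJ').det ^ 2 ≤ m ^ 2 := by
    rw [h1]
    calc (∑ S : Idx n k, a S * b S) ^ 2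
        ≤ (∑ S : Idx n k, a S ^ 2) * ∑ S : Idx n k, b S ^ 2 := hcs
      _ ≤ m * m := by
          rw [← h2, ← h3]
          exact mul_le_mul hI'le hJ'le (by rw [h3]; positivity) hm0
      _ = m ^ 2 := (sq m).symm
  rw [abs_of_nonneg hm0]
  nlinarith [abs_nonneg (subm A I' J' hI' hJ').det, sq_abs (subm A I' J' hI' hJ').det]
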